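/- Let X be a Riemannian n-manifold (or more simply, take X = ℝ^n with a Riemannian metric g), P ⊆ X a compact domain with 2n closed 'faces' ±Qᵢ ⊆ ∂P with dist(Qᵢ, −Qᵢ) ≥ λᵢ, and suppose there is a smooth map F : P → [0,1]^n sending ±Qᵢ into the corresponding faces of the cube which has nonzero degree (so F is surjective onto the cube and almost every point has nonempty preimage). Then vol_n(P) ≥ ∏ᵢ λᵢ. -/

import Mathlib

open MeasureTheory
open scoped NNReal ENNReal

private lemma besic_hadamard {n : ℕ}
    (A : EuclideanSpace ℝ (Fin n) →L[ℝ] EuclideanSpace ℝ (Fin n))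
    (h : ∀ i, ‖(EuclideanSpace.proj i : EuclideanSpace ℝ (Fin n) →L[ℝ] ℝ).comp A‖ ≤ 1) :
    |A.det| ≤ 1 := by
  classical
  haveI : Fact (Module.finrank ℝ (EuclideanSpace ℝ (Fin n)) = n) :=
    ⟨finrank_euclideanSpace_fin⟩
  set b : OrthonormalBasis (Fin n) ℝ (EuclideanSpace ℝ (Fin n)) :=
    EuclideanSpace.basisFun (Fin n) ℝ with hb
  set M : Matrix (Fin n) (Fin n) ℝ :=
    LinearMap.toMatrix b.toBasis b.toBasis (A : EuclideanSpace ℝ (Fin n) →ₗ[ℝ]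
      EuclideanSpace ℝ (Fin n)) with hM
  set g : Fin n → EuclideanSpace ℝ (Fin n) :=
    fun i => (WithLp.equiv 2 (Fin n → ℝ)).symm (fun j => M i j) with hg
  have hrepr : ∀ (x : EuclideanSpace ℝ (Fin n)) i, b.toBasis.repr x i = x i := by
    intro x i
    simp [hb]
  have hdet1 : A.det = M.det := (LinearMap.det_toMatrix _ _).symm
  have hdet2 : b.toBasis.det g = M.det := by
    rw [Module.Basis.det_apply, ← Matrix.det_transpose M]
    have : b.toBasis.toMatrix g = M.transpose := by
      ext i j
      simp only [Module.Basis.toMatrix_apply, hrepr, Matrix.transpose_apply]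
      rfl
    rw [this]
  have hMentry : ∀ i j, M i j = (EuclideanSpace.proj i : EuclideanSpace ℝ (Fin n) →L[ℝ] ℝ).comp A (b j) := by
    intro i j
    rw [hM, LinearMap.toMatrix_apply, hrepr]
    rfl
  -- expand a linear functional over the basis
  have hexp : ∀ (ℓ : EuclideanSpace ℝ (Fin n) →L[ℝ] ℝ) (x : EuclideanSpace ℝ (Fin n)),
      ℓ x = ∑ j, x j * ℓ (b j) := by
    intro ℓ x
    conv_lhs => rw [← b.toBasis.sum_repr x]
    rw [map_sum]
    refine Finset.sum_congr rfl fun j _ => ?_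
    rw [ContinuousLinearMap.map_smul, hrepr, smul_eq_mul,
      OrthonormalBasis.coe_toBasis]
  have hnorm_le : ∀ i, ‖g i‖ ≤ ‖(EuclideanSpace.proj i : EuclideanSpace ℝ (Fin n) →L[ℝ] ℝ).comp A‖ := by
    intro i
    set ℓ := (EuclideanSpace.proj i : EuclideanSpace ℝ (Fin n) →L[ℝ] ℝ).comp A with hℓ
    have hval : ℓ (g i) = ‖g i‖ ^ 2 := by
      rw [hexp ℓ (g i)]
      have : ‖g i‖ ^ 2 = ∑ j, g i j ^ 2 := by
        rw [EuclideanSpace.norm_eq, Real.sq_sqrt]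
        · refine Finset.sum_congr rfl fun j _ => ?_
          rw [Real.norm_eq_abs, sq_abs]
        · exact Finset.sum_nonneg fun j _ => sq_nonneg _
      rw [this]
      refine Finset.sum_congr rfl fun j _ => ?_
      have hgij : g i j = M i j := rfl
      rw [hgij, ← hMentry i j, sq]
    rcases eq_or_lt_of_le (norm_nonneg (g i)) with h0 | h0
    · rw [← h0]; exact norm_nonneg _
    have : ‖g i‖ * ‖g i‖ ≤ ‖ℓ‖ * ‖g i‖ := by
      rw [← sq, ← hval]
      exact (le_abs_self _).trans (ℓ.le_opNorm (g i))
    exact le_of_mul_le_mul_right this h0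
  have habs : |A.det| = |b.toBasis.det g| := by rw [hdet1, hdet2]
  rw [habs]
  calc |b.toBasis.det g| = |(b.toBasis.orientation).volumeForm g| :=
        ((b.toBasis.orientation).volumeForm_robust' b g).symm
    _ ≤ ∏ i, ‖g i‖ := Orientation.abs_volumeForm_apply_le _ g
    _ ≤ ∏ i, ‖(EuclideanSpace.proj i : EuclideanSpace ℝ (Fin n) →L[ℝ] ℝ).comp A‖ :=
        Finset.prod_le_prod (fun i _ => norm_nonneg _) (fun i _ => hnorm_le i)
    _ ≤ 1 := Finset.prod_le_one (fun i _ => norm_nonneg _) (fun i _ => h i)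

private lemma besic_image_null {n : ℕ} {K : ℝ≥0}
    {H : EuclideanSpace ℝ (Fin n) → EuclideanSpace ℝ (Fin n)}
    (hH : LipschitzWith K H) {N : Set (EuclideanSpace ℝ (Fin n))}
    (hN : volume N = 0) : volume (H '' N) = 0 := by
  classical
  set e := (MeasurableEquiv.toLp 2 (Fin n → ℝ)).symm with he
  have hmp : MeasurePreserving e volume volume :=
    EuclideanSpace.volume_preserving_symm_measurableEquiv_toLp (Fin n)
  have hcoe : ⇑e = ⇑(WithLp.equiv 2 (Fin n → ℝ)) := rfl
  have hcoe' : ⇑e.symm = ⇑(WithLp.equiv 2 (Fin n → ℝ)).symm := rfl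
  -- the conjugated map on `Fin n → ℝ`
  have hlip_e : LipschitzWith 1 ⇑e := by
    rw [hcoe]; exact PiLp.lipschitzWith_ofLp 2 _
  have hC' := (PiLp.antilipschitzWith_ofLp 2 (fun _ : Fin n => ℝ)).to_rightInverse
      (WithLp.equiv 2 (Fin n → ℝ)).apply_symm_apply
  have hC : LipschitzWith _ ⇑e.symm := hcoe' ▸ hC'
  set H' : (Fin n → ℝ) → (Fin n → ℝ) := fun y => e (H (e.symm y)) with hH'
  have hlipH' := hlip_e.comp (hH.comp hC)
  have himg : H '' N = e ⁻¹' (H' '' (e '' N)) := by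
    ext x
    constructor
    · rintro ⟨z, hz, rfl⟩
      exact ⟨e z, ⟨z, hz, rfl⟩, by simp [hH']⟩
    · rintro ⟨y, ⟨z, hz, rfl⟩, hx⟩
      refine ⟨z, hz, ?_⟩
      have := congrArg e.symm hx
      simpa [hH'] using this
  have hN' : volume (e '' N) = 0 := by
    have : e '' N = e.symm ⁻¹' N := Equiv.image_eq_preimage_symm _ _
    rw [this]
    exact (MeasurePreserving.symm e hmp).quasiMeasurePreserving.preimage_null hN
  have hHaus : volume (H' '' (e '' N)) = 0 := by
    have h1 : (μH[(n : ℝ)] : Measure (Fin n → ℝ)) = volume := by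
      simpa using (hausdorffMeasure_pi_real (ι := Fin n))
    have h2 := hlipH'.hausdorffMeasure_image_le (d := (n : ℝ)) (Nat.cast_nonneg n) (e '' N)
    rw [h1, hN', mul_zero] at h2
    exact le_antisymm h2 zero_le
  rw [himg]
  exact hmp.quasiMeasurePreserving.preimage_null hHaus

private lemma besic_image_volume_le {n : ℕ}
    (H : EuclideanSpace ℝ (Fin n) → EuclideanSpace ℝ (Fin n))
    (hcoord : ∀ i, LipschitzWith 1 (fun x => H x i))
    {s : Set (EuclideanSpace ℝ (Fin n))} (hs : MeasurableSet s) :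
    volume (H '' s) ≤ volume s := by
  classical
  -- `H` is globally Lipschitz
  have hpi : LipschitzWith 1 (fun x => (⇑(WithLp.equiv 2 (Fin n → ℝ)) (H x))) := by
    intro x y
    rw [ENNReal.coe_one, one_mul]
    rw [edist_pi_le_iff]
    intro i
    simpa using (hcoord i) x y
  have hHlip : ∃ K : ℝ≥0, LipschitzWith K H := by
    have h1 := (PiLp.antilipschitzWith_ofLp 2 (fun _ : Fin n => ℝ)).to_rightInverse
      (WithLp.equiv 2 (Fin n → ℝ)).apply_symm_apply
    have := h1.comp hpi
    have heq : (⇑(WithLp.equiv 2 (Fin n → ℝ)).symm ∘ fun x => (WithLp.equiv 2 (Fin n → ℝ)) (H x)) = H := by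
      funext x
      simp
    have this : LipschitzWith _ H := this
    exact ⟨_, this⟩
  obtain ⟨K, hK⟩ := hHlip
  set D := {x : EuclideanSpace ℝ (Fin n) | DifferentiableAt ℝ H x} with hD
  have hDm : MeasurableSet D := measurableSet_of_differentiableAt ℝ H
  set s' := s ∩ D with hs'
  have hs'm : MeasurableSet s' := hs.inter hDm
  have hderiv : ∀ x ∈ s', HasFDerivWithinAt H (fderiv ℝ H x) s' x := fun x hx =>
    hx.2.hasFDerivAt.hasFDerivWithinAt
  have hdet : ∀ x ∈ s', ENNReal.ofReal |(fderiv ℝ H x).det| ≤ 1 := by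
    intro x hx
    have hb : ∀ i, ‖(EuclideanSpace.proj i : EuclideanSpace ℝ (Fin n) →L[ℝ] ℝ).comp
        (fderiv ℝ H x)‖ ≤ 1 := by
      intro i
      have hcomp : (EuclideanSpace.proj i : EuclideanSpace ℝ (Fin n) →L[ℝ] ℝ).comp
          (fderiv ℝ H x) = fderiv ℝ (fun y => H y i) x := by
        rw [← ContinuousLinearMap.fderiv (EuclideanSpace.proj (𝕜 := ℝ) i)
          (x := H x)]
        exact (fderiv_comp x (EuclideanSpace.proj i).differentiableAt hx.2).symm
      rw [hcomp]
      simpa using norm_fderiv_le_of_lipschitz ℝ (hcoord i) (x₀ := x)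
    have := besic_hadamard (fderiv ℝ H x) hb
    exact ENNReal.ofReal_le_one.mpr this
  have h1 : volume (H '' s') ≤ volume s' := by
    calc volume (H '' s') ≤ ∫⁻ x in s', ENNReal.ofReal |(fderiv ℝ H x).det| :=
          addHaar_image_le_lintegral_abs_det_fderiv volume hs'm hderiv
      _ ≤ ∫⁻ _ in s', 1 := setLIntegral_mono' hs'm hdet
      _ = volume s' := by rw [setLIntegral_one]
  have h2 : volume (H '' (s \ D)) = 0 := by
    apply besic_image_null hK
    have hae := hK.ae_differentiableAt (μ := (volume : Measure (EuclideanSpace ℝ (Fin n))))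
    have hnull : volume {x : EuclideanSpace ℝ (Fin n) | ¬ DifferentiableAt ℝ H x} = 0 :=
      ae_iff.mp hae
    exact measure_mono_null (fun x hx => hx.2) hnull
  calc volume (H '' s) ≤ volume (H '' s' ∪ H '' (s \ D)) := by
        apply measure_mono
        rw [← Set.image_union]
        apply Set.image_mono
        rw [hs']
        exact fun x hx => (em (x ∈ D)).imp (fun h => ⟨hx, h⟩) (fun h => ⟨hx, h⟩)
    _ ≤ volume (H '' s') + volume (H '' (s \ D)) := measure_union_le _ _
    _ = volume (H '' s') := by rw [h2, add_zero]
    _ ≤ volume s' := h1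
    _ ≤ volume s := measure_mono Set.inter_subset_left


/-- Besicovitch's inequality: let `P ⊆ ℝ^n` be a compact domain with closed
"faces" `±Qᵢ ⊆ P` at mutual distance `dist(Qᵢ, −Qᵢ) ≥ λᵢ`, and suppose that
a map of nonzero degree `P → [0,1]^n` sending faces to the corresponding cube
faces exists — encoded homotopy-invariantly by the hypothesis that *every*
continuous map `P → [0,1]^n` sending `−Qᵢ` to `{yᵢ = 0}` and `Qᵢ` to
`{yᵢ = 1}` is onto the cube. Then `vol(P) ≥ ∏ᵢ λᵢ`. -/
theorem besicovitch_inequality {n : ℕ}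
    (P : Set (EuclideanSpace ℝ (Fin n))) (hPc : IsCompact P)
    (Q mQ : Fin n → Set (EuclideanSpace ℝ (Fin n)))
    (hQc : ∀ i, IsClosed (Q i)) (hmQc : ∀ i, IsClosed (mQ i))
    (hQP : ∀ i, Q i ⊆ P) (hmQP : ∀ i, mQ i ⊆ P)
    (lam : Fin n → ℝ) (hlam : ∀ i, 0 < lam i)
    (hdist : ∀ i, ∀ x ∈ Q i, ∀ y ∈ mQ i, lam i ≤ dist x y)
    (hdeg : ∀ G : EuclideanSpace ℝ (Fin n) → (Fin n → ℝ),
      ContinuousOn G P →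
      (∀ x ∈ P, ∀ i, G x i ∈ Set.Icc (0 : ℝ) 1) →
      (∀ i, ∀ x ∈ mQ i, G x i = 0) →
      (∀ i, ∀ x ∈ Q i, G x i = 1) →
      {y : Fin n → ℝ | ∀ i, y i ∈ Set.Icc (0 : ℝ) 1} ⊆ G '' P) :
    ∏ i, ENNReal.ofReal (lam i) ≤ volume P := by
  classical
  set u : Fin n → EuclideanSpace ℝ (Fin n) → ℝ := fun i x =>
    if (mQ i).Nonempty then min (lam i) (Metric.infDist x (mQ i)) else lam i with hu
  have hu_lip : ∀ i, LipschitzWith 1 (u i) := by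
    intro i
    by_cases h : (mQ i).Nonempty
    · simp only [hu, if_pos h]
      have := (LipschitzWith.const' (α := EuclideanSpace ℝ (Fin n)) (lam i) (K := 1)).min
        (Metric.lipschitz_infDist_pt (mQ i))
      simpa using this
    · simp only [hu, if_neg h]
      exact (LipschitzWith.const' (lam i)).weaken zero_le_one
  have hu_nonneg : ∀ i x, 0 ≤ u i x := by
    intro i x
    by_cases h : (mQ i).Nonempty
    · simp only [hu, if_pos h, le_min_iff]
      exact ⟨(hlam i).le, Metric.infDist_nonneg⟩
    · simp only [hu, if_neg h]
      exact (hlam i).le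
  have hu_le : ∀ i x, u i x ≤ lam i := by
    intro i x
    by_cases h : (mQ i).Nonempty
    · simp only [hu, if_pos h]
      exact min_le_left _ _
    · simp only [hu, if_neg h]
      exact le_rfl
  have hu_mQ : ∀ i, ∀ x ∈ mQ i, u i x = 0 := by
    intro i x hx
    have h : (mQ i).Nonempty := ⟨x, hx⟩
    simp only [hu, if_pos h, Metric.infDist_zero_of_mem hx]
    exact min_eq_right (hlam i).le
  have hu_Q : ∀ i, ∀ x ∈ Q i, u i x = lam i := by
    intro i x hx
    by_cases h : (mQ i).Nonempty
    · simp only [hu, if_pos h]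
      refine min_eq_left ?_
      haveI := h.to_subtype
      rw [Metric.infDist_eq_iInf]
      exact le_ciInf fun y => hdist i x hx y y.2
    · simp only [hu, if_neg h]
  -- the normalized map fed to the degree hypothesis
  set G : EuclideanSpace ℝ (Fin n) → (Fin n → ℝ) := fun x i => u i x / lam i with hG
  have hcube : {y : Fin n → ℝ | ∀ i, y i ∈ Set.Icc (0 : ℝ) 1} ⊆ G '' P := by
    apply hdeg
    · refine Continuous.continuousOn ?_
      refine continuous_pi fun i => ?_
      exact ((hu_lip i).continuous).div_const _
    · intro x _ i
      exact ⟨div_nonneg (hu_nonneg i x) (hlam i).le,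
        (div_le_one (hlam i)).mpr (hu_le i x)⟩
    · intro i x hx
      simp [hG, hu_mQ i x hx]
    · intro i x hx
      simp [hG, hu_Q i x hx, div_self (hlam i).ne']
  -- the rescaled map `H` with values in `∏ [0, lam i]`
  set H : EuclideanSpace ℝ (Fin n) → EuclideanSpace ℝ (Fin n) := fun x =>
    (WithLp.equiv 2 (Fin n → ℝ)).symm (fun i => u i x) with hH
  have hHcoord : ∀ i, LipschitzWith 1 (fun x => H x i) := fun i => hu_lip i
  set B : Set (EuclideanSpace ℝ (Fin n)) :=
    {y : EuclideanSpace ℝ (Fin n) | ∀ i, y i ∈ Set.Icc (0 : ℝ) (lam i)} with hB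
  have hBsub : B ⊆ H '' P := by
    intro y hy
    have hz : (fun i => y i / lam i) ∈ {y : Fin n → ℝ | ∀ i, y i ∈ Set.Icc (0 : ℝ) 1} := by
      intro i
      exact ⟨div_nonneg (hy i).1 (hlam i).le, (div_le_one (hlam i)).mpr (hy i).2⟩
    obtain ⟨x, hxP, hGx⟩ := hcube hz
    refine ⟨x, hxP, ?_⟩
    have : ∀ i, u i x = y i := by
      intro i
      have h1 : u i x / lam i = y i / lam i := congrFun hGx i
      rw [div_eq_div_iff (hlam i).ne' (hlam i).ne'] at h1
      exact mul_right_cancel₀ (hlam i).ne' h1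
    ext i
    exact this i
  have hBvol : volume B = ∏ i, ENNReal.ofReal (lam i) := by
    have hBpre : B = (MeasurableEquiv.toLp 2 (Fin n → ℝ)).symm ⁻¹'
        (Set.univ.pi fun i => Set.Icc (0 : ℝ) (lam i)) := by
      ext x
      simp only [hB, Set.mem_setOf_eq, Set.mem_preimage, Set.mem_univ_pi]
      rfl
    rw [hBpre,
      (EuclideanSpace.volume_preserving_symm_measurableEquiv_toLp (Fin n)).measure_preimage
        ((MeasurableSet.univ_pi fun i => measurableSet_Icc).nullMeasurableSet),
      volume_pi_pi]
    refine Finset.prod_congr rfl fun i _ => ?_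
    rw [Real.volume_Icc, sub_zero]
  calc ∏ i, ENNReal.ofReal (lam i) = volume B := hBvol.symm
    _ ≤ volume (H '' P) := measure_mono hBsub
    _ ≤ volume P := besic_image_volume_le H hHcoord hPc.measurableSet
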